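/- Let K_p denote the smallest constant such that ∫_𝔻 |u(z)|^{2p} dA(z) ≤ K_p ( (1/2π) ∫_0^{2π} |u(e^{it})|^p dt )² holds for all functions u harmonic on the unit disk 𝔻 with L^p boundary values (u given as Poisson extension of an L^p(𝕋) function). Then K_p is non-increasing in p: if 1 < p < q then K_q ≤ K_p. -/

import Mathlib

open Real MeasureTheory

/-- Poisson extension to the unit disk (in polar coordinates) of a boundary
function `f` on the circle, parametrized by arclength. -/
noncomputable def poissonExt (f : ℝ → ℝ) (r θ : ℝ) : ℝ :=
  (1 / (2 * Real.pi)) *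
    ∫ t in (0:ℝ)..(2 * Real.pi),
      ((1 - r ^ 2) / (1 - 2 * r * Real.cos (θ - t) + r ^ 2)) * f t

/-- `K` is an admissible constant for the isoperimetric inequality
`∫_𝔻 |u|^{2p} dA ≤ K (‖f‖_{L^p(𝕋)}^p)²` for harmonic `u = P[f]`,
where the area integral over the disk is written in polar coordinates with
normalized area measure. -/
def IsoBound (p K : ℝ) : Prop :=
  0 ≤ K ∧ ∀ f : ℝ → ℝ, Measurable f →
    IntervalIntegrable (fun t => |f t| ^ p) volume 0 (2 * Real.pi) →
    (1 / Real.pi) *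
        ∫ r in (0:ℝ)..1,
          (∫ θ in (0:ℝ)..(2 * Real.pi), |poissonExt f r θ| ^ (2 * p)) * r ≤
      K * ((1 / (2 * Real.pi)) * ∫ t in (0:ℝ)..(2 * Real.pi), |f t| ^ p) ^ 2

open intervalIntegral Set Filter Topology

noncomputable def pkern (r θ t : ℝ) : ℝ :=
  (1 - r ^ 2) / (1 - 2 * r * Real.cos (θ - t) + r ^ 2)

lemma twoPi_pos : (0:ℝ) < 2 * π := by positivity

variable {r θ t : ℝ}

lemma denom_pos (hr0 : 0 ≤ r) (hr1 : r < 1) (x : ℝ) :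
    0 < 1 - 2 * r * Real.cos x + r ^ 2 := by
  nlinarith [mul_nonneg hr0 (sub_nonneg.2 (Real.cos_le_one x)),
    mul_pos (sub_pos.2 hr1) (sub_pos.2 hr1)]

lemma pkern_pos (hr0 : 0 ≤ r) (hr1 : r < 1) : 0 < pkern r θ t :=
  div_pos (by nlinarith) (denom_pos hr0 hr1 _)

lemma pkern_nonneg (hr0 : 0 ≤ r) (hr1 : r < 1) : 0 ≤ pkern r θ t := (pkern_pos hr0 hr1).le

lemma pkern_le (hr0 : 0 ≤ r) (hr1 : r < 1) : pkern r θ t ≤ 2 / (1 - r) := by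
  rw [pkern, div_le_div_iff₀ (denom_pos hr0 hr1 _) (by linarith)]
  nlinarith [mul_nonneg hr0 (sub_nonneg.2 (Real.cos_le_one (θ - t))),
    mul_nonneg (sq_nonneg (1 - r)) (sub_nonneg.2 hr1.le)]

lemma pkern_cont (hr0 : 0 ≤ r) (hr1 : r < 1) : Continuous fun t => pkern r θ t := by
  apply Continuous.div (by continuity) (by continuity)
  exact fun x => (denom_pos hr0 hr1 _).ne'

lemma integral_pkern (hr0 : 0 ≤ r) (hr1 : r < 1) (θ : ℝ) :
    ∫ t in (0:ℝ)..(2 * π), pkern r θ t = 2 * π := by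
  set K : ℝ → ℝ := fun u => (1 - r ^ 2) / (1 - 2 * r * Real.cos u + r ^ 2) with hK
  have hD : ∀ u : ℝ, 0 < 1 - 2 * r * Real.cos u + r ^ 2 := denom_pos hr0 hr1
  have hB : ∀ u : ℝ, 0 < 1 - r * Real.cos u := by
    intro u; nlinarith [mul_nonneg hr0 (sub_nonneg.2 (Real.cos_le_one u))]
  have hKc : Continuous K := by
    apply Continuous.div (by continuity) (by continuity)
    exact fun x => (hD x).ne'
  have h1 : (∫ t in (0:ℝ)..(2 * π), pkern r θ t) = ∫ u in (θ - 2 * π)..(θ - 0), K u := by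
    rw [← intervalIntegral.integral_comp_sub_left K θ]; rfl
  have hper : Function.Periodic K (2 * π) := by
    intro x; simp only [hK, Real.cos_add_two_pi]
  have h2 : (∫ u in (θ - 2 * π)..(θ - 2 * π + 2 * π), K u) = ∫ u in (0:ℝ)..(0 + 2 * π), K u :=
    hper.intervalIntegral_add_eq (θ - 2 * π) 0
  set F : ℝ → ℝ := fun u => u + 2 * Real.arctan (r * Real.sin u / (1 - r * Real.cos u)) with hF
  have hderiv : ∀ u ∈ Set.uIcc (0:ℝ) (2 * π), HasDerivAt F (K u) u := by
    intro u _
    have hA : HasDerivAt (fun v => r * Real.sin v) (r * Real.cos u) u :=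
      (Real.hasDerivAt_sin u).const_mul r
    have hBd : HasDerivAt (fun v => 1 - r * Real.cos v) (r * Real.sin u) u := by
      have := ((Real.hasDerivAt_cos u).const_mul r).const_sub 1
      simpa [mul_comm] using this
    have hG := hA.div hBd (hB u).ne'
    have hat := (Real.hasDerivAt_arctan (r * Real.sin u / (1 - r * Real.cos u))).comp u hG
    have hsum := (hasDerivAt_id u).add (hat.const_mul 2)
    refine hsum.congr_deriv ?_; symm
    have hsc : Real.sin u ^ 2 + Real.cos u ^ 2 = 1 := Real.sin_sq_add_cos_sq u
    have hBne := (hB u).ne'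
    have key : (1 + (r * Real.sin u / (1 - r * Real.cos u)) ^ 2) * (1 - r * Real.cos u) ^ 2
        = 1 - 2 * r * Real.cos u + r ^ 2 := by
      field_simp
      linear_combination (r ^ 2) * hsc
    have e1 : 1 / (1 + (r * Real.sin u / (1 - r * Real.cos u)) ^ 2) *
        ((r * Real.cos u * (1 - r * Real.cos u) - r * Real.sin u * (r * Real.sin u)) /
          (1 - r * Real.cos u) ^ 2)
        = (r * Real.cos u * (1 - r * Real.cos u) - r * Real.sin u * (r * Real.sin u)) /
          (1 - 2 * r * Real.cos u + r ^ 2) := by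
      rw [div_mul_div_comm, one_mul, key]
    show K u = _
    rw [e1, hK]
    have hnum : 1 - r ^ 2 = (1 - 2 * r * Real.cos u + r ^ 2) +
        2 * (r * Real.cos u * (1 - r * Real.cos u) - r * Real.sin u * (r * Real.sin u)) := by
      linear_combination (2 * r ^ 2) * hsc
    simp only [id_eq]
    rw [hnum]
    field_simp [(hD u).ne']
  have hKint : IntervalIntegrable K volume 0 (2 * π) := hKc.intervalIntegrable _ _
  have h4 : (∫ u in (0:ℝ)..(2 * π), K u) = F (2 * π) - F 0 :=
    intervalIntegral.integral_eq_sub_of_hasDerivAt hderiv hKint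
  have h5 : F (2 * π) - F 0 = 2 * π := by
    simp [hF, Real.sin_two_pi, Real.cos_two_pi]
  rw [h1]
  calc (∫ u in (θ - 2 * π)..(θ - 0), K u) = ∫ u in (θ - 2 * π)..(θ - 2 * π + 2 * π), K u := by
        norm_num
    _ = ∫ u in (0:ℝ)..(0 + 2 * π), K u := h2
    _ = 2 * π := by rw [zero_add, h4, h5]


lemma poissonExt_eq (f : ℝ → ℝ) (r θ : ℝ) :
    poissonExt f r θ = (1 / (2 * π)) * ∫ t in (0:ℝ)..(2 * π), pkern r θ t * f t := rfl

lemma poissonExt_eq' (f : ℝ → ℝ) (r θ : ℝ) :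
    poissonExt f r θ = (1 / (2 * π)) * ∫ t in Ioc (0:ℝ) (2 * π), pkern r θ t * f t := by
  rw [poissonExt_eq, intervalIntegral.integral_of_le twoPi_pos.le]

lemma measurable_poissonExt {f : ℝ → ℝ} (hf : Measurable f) :
    Measurable fun x : ℝ × ℝ => poissonExt f x.1 x.2 := by
  simp only [poissonExt_eq']
  apply Measurable.const_mul
  have hm : StronglyMeasurable fun z : (ℝ × ℝ) × ℝ => pkern z.1.1 z.1.2 z.2 * f z.2 := by
    apply Measurable.stronglyMeasurable
    apply Measurable.mul _ (hf.comp measurable_snd)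
    unfold pkern
    fun_prop
  exact hm.integral_prod_right'.measurable

lemma integrableOn_of_le {f h : ℝ → ℝ} (hf : Measurable f) (hh : IntegrableOn h (Ioc 0 (2*π)))
    (hbd : ∀ t, |f t| ≤ h t) : IntegrableOn f (Ioc 0 (2*π)) :=
  Integrable.mono' hh hf.aestronglyMeasurable
    (ae_of_all _ fun t => by rw [Real.norm_eq_abs]; exact hbd t)

lemma abs_rpow_le_one_add_rpow (x : ℝ) {s q' : ℝ} (hs : 0 ≤ s) (hsq : s ≤ q') :
    |x| ^ s ≤ 1 + |x| ^ q' := by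
  rcases le_total |x| 1 with h | h
  · have h1 : |x| ^ s ≤ 1 := Real.rpow_le_one (abs_nonneg x) h hs
    have h2 : (0:ℝ) ≤ |x| ^ q' := Real.rpow_nonneg (abs_nonneg x) q'
    linarith
  · have h1 : |x| ^ s ≤ |x| ^ q' := Real.rpow_le_rpow_of_exponent_le h hsq
    linarith

lemma integrableOn_pkern_mul {h : ℝ → ℝ} (hm : Measurable h) (hr0 : 0 ≤ r) (hr1 : r < 1)
    (hh : IntegrableOn h (Ioc 0 (2*π))) :
    IntegrableOn (fun t => pkern r θ t * h t) (Ioc 0 (2*π)) := by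
  apply Integrable.bdd_mul (c := 2 / (1 - r)) hh ((pkern_cont hr0 hr1).measurable).aestronglyMeasurable
  refine ae_of_all _ fun t => ?_
  rw [Real.norm_eq_abs, abs_of_nonneg (pkern_nonneg hr0 hr1)]
  exact pkern_le hr0 hr1

lemma intervalIntegrable_pkern_mul {h : ℝ → ℝ} (hm : Measurable h) (hr0 : 0 ≤ r) (hr1 : r < 1)
    (hh : IntegrableOn h (Ioc 0 (2*π))) :
    IntervalIntegrable (fun t => pkern r θ t * h t) volume 0 (2*π) :=
  (intervalIntegrable_iff_integrableOn_Ioc_of_le twoPi_pos.le).2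
    (integrableOn_pkern_mul hm hr0 hr1 hh)

lemma poissonExt_nonneg {h : ℝ → ℝ} (hpos : ∀ t, 0 ≤ h t) (hr0 : 0 ≤ r) (hr1 : r < 1) :
    0 ≤ poissonExt h r θ := by
  rw [poissonExt_eq]
  have h1 : 0 ≤ ∫ t in (0:ℝ)..(2*π), pkern r θ t * h t :=
    intervalIntegral.integral_nonneg twoPi_pos.le
      (fun t _ => mul_nonneg (pkern_nonneg hr0 hr1) (hpos t))
  have h2 : (0:ℝ) ≤ 1 / (2 * π) := by positivity
  exact mul_nonneg h2 h1

lemma poissonExt_mono {h₁ h₂ : ℝ → ℝ} (hm₁ : Measurable h₁) (hm₂ : Measurable h₂)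
    (hi₁ : IntegrableOn h₁ (Ioc 0 (2*π))) (hi₂ : IntegrableOn h₂ (Ioc 0 (2*π)))
    (hle : ∀ t, h₁ t ≤ h₂ t) (hr0 : 0 ≤ r) (hr1 : r < 1) :
    poissonExt h₁ r θ ≤ poissonExt h₂ r θ := by
  rw [poissonExt_eq, poissonExt_eq]
  apply mul_le_mul_of_nonneg_left _ (by positivity)
  exact intervalIntegral.integral_mono_on twoPi_pos.le
    (intervalIntegrable_pkern_mul hm₁ hr0 hr1 hi₁)
    (intervalIntegrable_pkern_mul hm₂ hr0 hr1 hi₂)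
    (fun t _ => mul_le_mul_of_nonneg_left (hle t) (pkern_nonneg hr0 hr1))

lemma poissonExt_le_const {h : ℝ → ℝ} (hm : Measurable h) {c : ℝ}
    (hb : ∀ t, h t ≤ c) (hi : IntegrableOn h (Ioc 0 (2*π))) (hr0 : 0 ≤ r) (hr1 : r < 1) :
    poissonExt h r θ ≤ c := by
  have hc : poissonExt h r θ ≤ poissonExt (fun _ => c) r θ :=
    poissonExt_mono hm measurable_const hi (integrableOn_const measure_Ioc_lt_top.ne)
      hb hr0 hr1
  refine hc.trans_eq ?_
  rw [poissonExt_eq]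
  rw [intervalIntegral.integral_mul_const, integral_pkern hr0 hr1]
  have : (2:ℝ) * π ≠ 0 := twoPi_pos.ne'
  field_simp

lemma abs_poissonExt_le {f : ℝ → ℝ} (hm : Measurable f)
    (hi : IntegrableOn (fun t => |f t|) (Ioc 0 (2*π))) (hr0 : 0 ≤ r) (hr1 : r < 1) :
    |poissonExt f r θ| ≤ (1 / (2*π)) * ∫ t in (0:ℝ)..(2*π), pkern r θ t * |f t| := by
  rw [poissonExt_eq, abs_mul, abs_of_nonneg (by positivity : (0:ℝ) ≤ 1 / (2*π))]
  apply mul_le_mul_of_nonneg_left _ (by positivity)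
  calc |∫ t in (0:ℝ)..(2*π), pkern r θ t * f t|
      ≤ ∫ t in (0:ℝ)..(2*π), |pkern r θ t * f t| :=
        intervalIntegral.abs_integral_le_integral_abs twoPi_pos.le
    _ = ∫ t in (0:ℝ)..(2*π), pkern r θ t * |f t| := by
        congr 1; funext t; rw [abs_mul, abs_of_nonneg (pkern_nonneg hr0 hr1)]

lemma jensen_rpow {f : ℝ → ℝ} {s : ℝ} (hs : 1 < s) (hm : Measurable f)
    (hfi : IntegrableOn (fun t => |f t|) (Ioc 0 (2*π)))
    (hgi : IntegrableOn (fun t => |f t| ^ s) (Ioc 0 (2*π)))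
    (hr0 : 0 ≤ r) (hr1 : r < 1) :
    |poissonExt f r θ| ^ s ≤ poissonExt (fun t => |f t| ^ s) r θ := by
  set μ : Measure ℝ := volume.restrict (Ioc (0:ℝ) (2*π)) with hμ
  haveI : IsFiniteMeasure μ := by
    constructor
    rw [hμ, Measure.restrict_apply_univ]
    exact measure_Ioc_lt_top
  set s' : ℝ := s / (s - 1) with hs'
  have hconj : s'.HolderConjugate s := (Real.HolderConjugate.conjExponent hs).symm
  have hs'1 : 1 < s' := hconj.lt
  have hs0 : (0:ℝ) < s := by linarith
  have hs'0 : (0:ℝ) < s' := by linarith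
  -- the two Hölder factors
  set a : ℝ → ℝ := fun t => pkern r θ t ^ (1 / s') with ha
  set b : ℝ → ℝ := fun t => pkern r θ t ^ (1 / s) * |f t| with hb
  have hka : Measurable fun t => pkern r θ t := (pkern_cont hr0 hr1).measurable
  have ha_nonneg : ∀ t, 0 ≤ a t := fun t => Real.rpow_nonneg (pkern_nonneg hr0 hr1) _
  have hb_nonneg : ∀ t, 0 ≤ b t :=
    fun t => mul_nonneg (Real.rpow_nonneg (pkern_nonneg hr0 hr1) _) (abs_nonneg _)
  have hMa : MemLp a (ENNReal.ofReal s') μ := by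
    apply MemLp.of_bound (((Real.continuous_rpow_const (by positivity)).measurable.comp hka).aestronglyMeasurable) ((2 / (1 - r)) ^ (1 / s'))
    apply ae_of_all
    intro t
    show ‖a t‖ ≤ (2 / (1 - r)) ^ (1 / s')
    rw [Real.norm_eq_abs, abs_of_nonneg (ha_nonneg t)]
    exact Real.rpow_le_rpow (pkern_nonneg hr0 hr1) (pkern_le hr0 hr1) (by positivity)
  have hb_meas : Measurable b := ((Real.continuous_rpow_const (by positivity)).measurable.comp hka).mul hm.abs
  have hbs : ∀ t, b t ^ s = pkern r θ t * |f t| ^ s := by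
    intro t
    rw [hb]
    rw [Real.mul_rpow (Real.rpow_nonneg (pkern_nonneg hr0 hr1) _) (abs_nonneg _),
      ← Real.rpow_mul (pkern_nonneg hr0 hr1), one_div_mul_cancel hs0.ne', Real.rpow_one]
  have hMb : MemLp b (ENNReal.ofReal s) μ := by
    have A : ENNReal.ofReal s ≠ 0 := by
      rw [Ne, ENNReal.ofReal_eq_zero]; push_neg; exact hs0
    have B : ENNReal.ofReal s ≠ ⊤ := ENNReal.ofReal_ne_top
    rw [← memLp_norm_rpow_iff hb_meas.aestronglyMeasurable A B,
      ENNReal.toReal_ofReal hs0.le, ENNReal.div_self A B, memLp_one_iff_integrable]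
    have : (fun t => ‖b t‖ ^ s) = fun t => pkern r θ t * |f t| ^ s := by
      funext t; rw [Real.norm_eq_abs, abs_of_nonneg (hb_nonneg t), hbs t]
    rw [this]
    exact integrableOn_pkern_mul ((Real.continuous_rpow_const hs0.le).measurable.comp hm.abs) hr0 hr1 hgi
  have hHold := MeasureTheory.integral_mul_le_Lp_mul_Lq_of_nonneg hconj
    (ae_of_all μ ha_nonneg) (ae_of_all μ hb_nonneg) hMa hMb
  -- identify the three integrals
  have hab : ∀ t, a t * b t = pkern r θ t * |f t| := by
    intro t
    rw [ha, hb, ← mul_assoc, ← Real.rpow_add (pkern_pos hr0 hr1), one_div s', one_div s,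
      hconj.inv_add_inv_eq_one, Real.rpow_one]
  have has' : ∀ t, a t ^ s' = pkern r θ t := by
    intro t
    rw [ha, ← Real.rpow_mul (pkern_nonneg hr0 hr1), one_div_mul_cancel hs'0.ne', Real.rpow_one]
  have hIa : ∫ t, a t ^ s' ∂μ = 2 * π := by
    simp_rw [has']
    rw [hμ, ← intervalIntegral.integral_of_le twoPi_pos.le]
    exact integral_pkern hr0 hr1 θ
  have hPg0 : 0 ≤ poissonExt (fun t => |f t| ^ s) r θ :=
    poissonExt_nonneg (fun t => Real.rpow_nonneg (abs_nonneg _) s) hr0 hr1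
  have hIb : ∫ t, b t ^ s ∂μ = 2 * π * poissonExt (fun t => |f t| ^ s) r θ := by
    simp_rw [hbs]
    rw [poissonExt_eq', ← hμ, ← mul_assoc]
    have : (2 * π) * (1 / (2*π)) = 1 := by field_simp
    rw [this, one_mul]
  have key : |poissonExt f r θ| ≤ poissonExt (fun t => |f t| ^ s) r θ ^ (1 / s) := by
    have h1 := abs_poissonExt_le hm hfi hr0 hr1 (θ := θ)
    have h2 : (∫ t in (0:ℝ)..(2*π), pkern r θ t * |f t|) = ∫ t, a t * b t ∂μ := by
      rw [intervalIntegral.integral_of_le twoPi_pos.le, ← hμ]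
      simp_rw [hab]
    rw [h2] at h1
    have h3 := hHold
    rw [hIa, hIb] at h3
    have h4 : (2 * π * poissonExt (fun t => |f t| ^ s) r θ) ^ (1 / s)
        = (2 * π) ^ (1 / s) * poissonExt (fun t => |f t| ^ s) r θ ^ (1 / s) :=
      Real.mul_rpow twoPi_pos.le hPg0
    have h5 : (1 / (2 * π)) * ((2 * π) ^ (1 / s') * ((2 * π) ^ (1/s) *
        poissonExt (fun t => |f t| ^ s) r θ ^ (1 / s)))
        = poissonExt (fun t => |f t| ^ s) r θ ^ (1 / s) := by
      rw [← mul_assoc ((2 * π) ^ (1 / s')), ← Real.rpow_add twoPi_pos, one_div s', one_div s,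
        hconj.inv_add_inv_eq_one, Real.rpow_one]
      field_simp
    calc |poissonExt f r θ| ≤ (1 / (2*π)) * ∫ t, a t * b t ∂μ := h1
      _ ≤ (1 / (2*π)) * ((2 * π) ^ (1 / s') *
          (2 * π * poissonExt (fun t => |f t| ^ s) r θ) ^ (1 / s)) :=
          mul_le_mul_of_nonneg_left h3 (by positivity)
      _ = poissonExt (fun t => |f t| ^ s) r θ ^ (1 / s) := by rw [h4]; exact h5
  calc |poissonExt f r θ| ^ s ≤ (poissonExt (fun t => |f t| ^ s) r θ ^ (1 / s)) ^ s :=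
        Real.rpow_le_rpow (abs_nonneg _) key hs0.le
    _ = poissonExt (fun t => |f t| ^ s) r θ := by
        rw [← Real.rpow_mul hPg0, one_div_mul_cancel hs0.ne', Real.rpow_one]

lemma isoBound_mono {p q K : ℝ} (hp : 1 < p) (hpq : p < q) (hK : IsoBound p K) :
    IsoBound q K := by
  obtain ⟨hK0, hKb⟩ := hK
  refine ⟨hK0, fun f hm hfq => ?_⟩
  have hq1 : 1 < q := hp.trans hpq
  have hp0 : (0:ℝ) < p := by linarith
  have hq0 : (0:ℝ) < q := by linarith
  set s : ℝ := q / p with hs_def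
  have hs1 : 1 < s := (one_lt_div hp0).2 hpq
  have hs0 : (0:ℝ) < s := by linarith
  have hsp : s * p = q := div_mul_cancel₀ q hp0.ne'
  have hsq : s ≤ q := by rw [hs_def, div_le_iff₀ hp0]; nlinarith
  set g : ℝ → ℝ := fun t => |f t| ^ s with hg_def
  have hg_nonneg : ∀ t, 0 ≤ g t := fun t => Real.rpow_nonneg (abs_nonneg _) s
  have hgm : Measurable g := (Real.continuous_rpow_const hs0.le).measurable.comp hm.abs
  have hgp : ∀ t, g t ^ p = |f t| ^ q := by
    intro t
    rw [hg_def, ← Real.rpow_mul (abs_nonneg (f t)), hsp]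
  set gn : ℕ → ℝ → ℝ := fun n t => min (g t) n with hgn_def
  have hgnm : ∀ n, Measurable (gn n) := fun n => hgm.min measurable_const
  have hgn_nonneg : ∀ n t, 0 ≤ gn n t := fun n t => le_min (hg_nonneg t) (Nat.cast_nonneg n)
  have hgn_le_g : ∀ n t, gn n t ≤ g t := fun n t => min_le_left _ _
  have hgn_le_n : ∀ n t, gn n t ≤ (n:ℝ) := fun n t => min_le_right _ _
  have hgn_mono : ∀ t, Monotone fun n => gn n t := fun t n m hnm =>
    min_le_min le_rfl (Nat.cast_le.2 hnm)
  -- integrability facts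
  have hfq' : IntegrableOn (fun t => |f t| ^ q) (Ioc 0 (2*π)) :=
    (intervalIntegrable_iff_integrableOn_Ioc_of_le twoPi_pos.le).1 hfq
  have hsum : IntegrableOn (fun t => 1 + |f t| ^ q) (Ioc 0 (2*π)) :=
    (integrableOn_const measure_Ioc_lt_top.ne).add hfq'
  have habs : IntegrableOn (fun t => |f t|) (Ioc 0 (2*π)) := by
    apply integrableOn_of_le hm.abs hsum
    intro t
    rw [abs_abs]
    have := abs_rpow_le_one_add_rpow (f t) zero_le_one hq1.le
    rwa [Real.rpow_one] at this
  have hgint : IntegrableOn g (Ioc 0 (2*π)) := by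
    apply integrableOn_of_le hgm hsum
    intro t
    rw [abs_of_nonneg (hg_nonneg t)]
    exact abs_rpow_le_one_add_rpow (f t) hs0.le hsq
  have hgnint : ∀ n, IntegrableOn (gn n) (Ioc 0 (2*π)) := by
    intro n
    apply integrableOn_of_le (hgnm n) hgint
    intro t
    rw [abs_of_nonneg (hgn_nonneg n t)]
    exact hgn_le_g n t
  -- the boundary constant
  set C : ℝ := (1 / (2 * π)) * ∫ t in (0:ℝ)..(2 * π), |f t| ^ q with hC_def
  have hintq_nonneg : 0 ≤ ∫ t in (0:ℝ)..(2 * π), |f t| ^ q :=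
    intervalIntegral.integral_nonneg twoPi_pos.le fun t _ => Real.rpow_nonneg (abs_nonneg _) q
  have hC0 : 0 ≤ C := mul_nonneg (by positivity) hintq_nonneg
  -- bound from `IsoBound p K` for each truncation
  have hAn : ∀ n : ℕ,
      (∫ r in (0:ℝ)..1, (∫ θ in (0:ℝ)..(2 * π), |poissonExt (gn n) r θ| ^ (2 * p)) * r)
        ≤ π * (K * C ^ 2) := by
    intro n
    have hgnp_le : ∀ t, |gn n t| ^ p ≤ |f t| ^ q := by
      intro t
      rw [abs_of_nonneg (hgn_nonneg n t), ← hgp t]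
      exact Real.rpow_le_rpow (hgn_nonneg n t) (hgn_le_g n t) hp0.le
    have hgnp_meas : Measurable fun t => |gn n t| ^ p :=
      (Real.continuous_rpow_const hp0.le).measurable.comp (hgnm n).abs
    have hgnp_int : IntervalIntegrable (fun t => |gn n t| ^ p) volume 0 (2 * π) := by
      rw [intervalIntegrable_iff_integrableOn_Ioc_of_le twoPi_pos.le]
      apply integrableOn_of_le hgnp_meas hfq'
      intro t
      rw [abs_of_nonneg (Real.rpow_nonneg (abs_nonneg _) p)]
      exact hgnp_le t
    have h1 := hKb (gn n) (hgnm n) hgnp_int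
    have h2 : (1 / (2 * π)) * (∫ t in (0:ℝ)..(2 * π), |gn n t| ^ p) ≤ C := by
      rw [hC_def]
      apply mul_le_mul_of_nonneg_left _ (by positivity)
      apply intervalIntegral.integral_mono_on twoPi_pos.le hgnp_int
        ((intervalIntegrable_iff_integrableOn_Ioc_of_le twoPi_pos.le).2 hfq')
      exact fun t _ => hgnp_le t
    have h2' : 0 ≤ (1 / (2 * π)) * ∫ t in (0:ℝ)..(2 * π), |gn n t| ^ p := by
      apply mul_nonneg (by positivity)
      exact intervalIntegral.integral_nonneg twoPi_pos.le
        fun t _ => Real.rpow_nonneg (abs_nonneg _) p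
    have h3 : K * ((1 / (2 * π)) * ∫ t in (0:ℝ)..(2 * π), |gn n t| ^ p) ^ 2 ≤ K * C ^ 2 :=
      mul_le_mul_of_nonneg_left (pow_le_pow_left₀ h2' h2 2) hK0
    have h4 := h1.trans h3
    have hπ : (0:ℝ) < π := Real.pi_pos
    calc (∫ r in (0:ℝ)..1, (∫ θ in (0:ℝ)..(2 * π), |poissonExt (gn n) r θ| ^ (2 * p)) * r)
        = π * ((1 / π) *
          ∫ r in (0:ℝ)..1, (∫ θ in (0:ℝ)..(2 * π), |poissonExt (gn n) r θ| ^ (2 * p)) * r) := by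
          field_simp
      _ ≤ π * (K * C ^ 2) := mul_le_mul_of_nonneg_left h4 hπ.le
  -- pointwise bounds on the truncated Poisson extensions
  have hPgn_nonneg : ∀ n : ℕ, ∀ r θ : ℝ, 0 ≤ r → r < 1 → 0 ≤ poissonExt (gn n) r θ :=
    fun n r θ hr0 hr1 => poissonExt_nonneg (hgn_nonneg n) hr0 hr1
  have hPgn_le : ∀ n : ℕ, ∀ r θ : ℝ, 0 ≤ r → r < 1 → poissonExt (gn n) r θ ≤ (n:ℝ) :=
    fun n r θ hr0 hr1 => poissonExt_le_const (hgnm n) (hgn_le_n n) (hgnint n) hr0 hr1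
  have hPgn_mono : ∀ r θ : ℝ, 0 ≤ r → r < 1 → Monotone fun n : ℕ => poissonExt (gn n) r θ :=
    fun r θ hr0 hr1 n m hnm => poissonExt_mono (hgnm n) (hgnm m) (hgnint n) (hgnint m)
      (fun t => hgn_mono t hnm) hr0 hr1
  have hPgn_tendsto : ∀ r θ : ℝ, 0 ≤ r → r < 1 →
      Tendsto (fun n : ℕ => poissonExt (gn n) r θ) atTop (𝓝 (poissonExt g r θ)) := by
    intro r θ hr0 hr1
    have := integral_tendsto_of_tendsto_of_monotone
      (μ := volume.restrict (Ioc (0:ℝ) (2*π)))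
      (f := fun n t => pkern r θ t * gn n t) (F := fun t => pkern r θ t * g t)
      (fun n => integrableOn_pkern_mul (hgnm n) hr0 hr1 (hgnint n))
      (integrableOn_pkern_mul hgm hr0 hr1 hgint)
      (ae_of_all _ fun t n m hnm =>
        mul_le_mul_of_nonneg_left (hgn_mono t hnm) (pkern_nonneg hr0 hr1))
      (ae_of_all _ fun t => by
        apply Tendsto.const_mul
        apply tendsto_atTop_of_eventually_const (i₀ := ⌈g t⌉₊)
        intro n hn
        exact min_eq_left ((Nat.le_ceil (g t)).trans (Nat.cast_le.2 hn)))
    simp only [poissonExt_eq']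
    exact this.const_mul _
  -- Jensen + limits: pointwise domination in ℝ≥0∞
  have hkey : ∀ r θ : ℝ, 0 < r → r < 1 →
      ENNReal.ofReal (|poissonExt f r θ| ^ (2 * q))
        ≤ ⨆ n : ℕ, ENNReal.ofReal (|poissonExt (gn n) r θ| ^ (2 * p)) := by
    intro r θ hr0 hr1
    have hr0' : (0:ℝ) ≤ r := hr0.le
    have hJ : |poissonExt f r θ| ^ s ≤ poissonExt g r θ :=
      jensen_rpow hs1 hm habs hgint hr0' hr1
    have hPg0 : 0 ≤ poissonExt g r θ := poissonExt_nonneg hg_nonneg hr0' hr1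
    have e1 : |poissonExt f r θ| ^ (2 * q) = (|poissonExt f r θ| ^ s) ^ (2 * p) := by
      rw [← Real.rpow_mul (abs_nonneg _)]
      congr 1
      rw [← hsp]; ring
    have e2 : (|poissonExt f r θ| ^ s) ^ (2 * p) ≤ poissonExt g r θ ^ (2 * p) :=
      Real.rpow_le_rpow (Real.rpow_nonneg (abs_nonneg _) s) hJ (by positivity)
    have hmono2 : Monotone fun n : ℕ => ENNReal.ofReal (|poissonExt (gn n) r θ| ^ (2 * p)) := by
      intro n m hnm
      apply ENNReal.ofReal_le_ofReal
      rw [abs_of_nonneg (hPgn_nonneg n r θ hr0' hr1),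
        abs_of_nonneg (hPgn_nonneg m r θ hr0' hr1)]
      exact Real.rpow_le_rpow (hPgn_nonneg n r θ hr0' hr1)
        (hPgn_mono r θ hr0' hr1 hnm) (by positivity)
    have htend2 : Tendsto (fun n : ℕ => ENNReal.ofReal (|poissonExt (gn n) r θ| ^ (2 * p)))
        atTop (𝓝 (ENNReal.ofReal (poissonExt g r θ ^ (2 * p)))) := by
      apply (ENNReal.continuous_ofReal.tendsto _).comp
      have habs_eq : (fun n : ℕ => |poissonExt (gn n) r θ| ^ (2 * p))
          = fun n : ℕ => poissonExt (gn n) r θ ^ (2 * p) := by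
        funext n; rw [abs_of_nonneg (hPgn_nonneg n r θ hr0' hr1)]
      rw [habs_eq]
      have hc : ContinuousAt (fun x : ℝ => x ^ (2 * p)) (poissonExt g r θ) :=
        Real.continuousAt_rpow_const _ _ (Or.inr (by positivity))
      exact hc.tendsto.comp (hPgn_tendsto r θ hr0' hr1)
    have e3 : ENNReal.ofReal (poissonExt g r θ ^ (2 * p))
        = ⨆ n : ℕ, ENNReal.ofReal (|poissonExt (gn n) r θ| ^ (2 * p)) :=
      tendsto_nhds_unique htend2 (tendsto_atTop_iSup hmono2)
    calc ENNReal.ofReal (|poissonExt f r θ| ^ (2 * q))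
        ≤ ENNReal.ofReal (poissonExt g r θ ^ (2 * p)) := by
          apply ENNReal.ofReal_le_ofReal
          rw [e1]; exact e2
      _ = _ := e3
  -- monotonicity of the truncated integrands, valid for every θ
  have hmono_n : ∀ r θ : ℝ, 0 ≤ r → r < 1 →
      Monotone fun n : ℕ => ENNReal.ofReal (|poissonExt (gn n) r θ| ^ (2 * p)) := by
    intro r θ hr0 hr1 n m hnm
    apply ENNReal.ofReal_le_ofReal
    rw [abs_of_nonneg (hPgn_nonneg n r θ hr0 hr1), abs_of_nonneg (hPgn_nonneg m r θ hr0 hr1)]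
    exact Real.rpow_le_rpow (hPgn_nonneg n r θ hr0 hr1)
      (hPgn_mono r θ hr0 hr1 hnm) (by positivity)
  have hres : volume.restrict (Ioc (0:ℝ) 1) = volume.restrict (Ioo (0:ℝ) 1) :=
    (Measure.restrict_congr_set Ioo_ae_eq_Ioc).symm
  -- measurability of inner lintegrals
  have hmeas_inner : ∀ (h : ℝ → ℝ), Measurable h → ∀ e : ℝ, 0 ≤ e →
      Measurable fun r => ∫⁻ θ in Ioc (0:ℝ) (2*π),
        ENNReal.ofReal (|poissonExt h r θ| ^ e) := by
    intro h hh e he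
    apply Measurable.lintegral_prod_right'
      (f := fun z : ℝ × ℝ => ENNReal.ofReal (|poissonExt h z.1 z.2| ^ e))
    exact ((Real.continuous_rpow_const he).measurable.comp
      (measurable_poissonExt hh).abs).ennreal_ofReal
  have hmeas_innerM : ∀ (h : ℝ → ℝ), Measurable h → ∀ e : ℝ, 0 ≤ e →
      Measurable fun z : ℝ × ℝ => |poissonExt h z.1 z.2| ^ e := fun h hh e he =>
    (Real.continuous_rpow_const he).measurable.comp (measurable_poissonExt hh).abs
  -- the ℝ≥0∞-valued integrands
  set uI : ℝ → ENNReal := fun r =>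
    (∫⁻ θ in Ioc (0:ℝ) (2*π), ENNReal.ofReal (|poissonExt f r θ| ^ (2*q)))
      * ENNReal.ofReal r with huI_def
  set vI : ℕ → ℝ → ENNReal := fun n r =>
    (∫⁻ θ in Ioc (0:ℝ) (2*π), ENNReal.ofReal (|poissonExt (gn n) r θ| ^ (2*p)))
      * ENNReal.ofReal r with hvI_def
  have hvmeas : ∀ n, Measurable (vI n) := fun n =>
    (hmeas_inner (gn n) (hgnm n) (2*p) (by positivity)).mul
      (ENNReal.measurable_ofReal.comp measurable_id)
  -- θ-integrability for the truncations, and for f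
  have hInt_n : ∀ (n : ℕ) (r : ℝ), 0 ≤ r → r < 1 →
      IntegrableOn (fun θ => |poissonExt (gn n) r θ| ^ (2*p)) (Ioc (0:ℝ) (2*π)) := by
    intro n r hr0 hr1
    apply Integrable.mono' (g := fun _ => (n:ℝ) ^ (2*p))
      (integrableOn_const measure_Ioc_lt_top.ne)
    · exact ((hmeas_innerM (gn n) (hgnm n) (2*p) (by positivity)).comp
        (measurable_const.prodMk measurable_id)).aestronglyMeasurable
    · apply ae_of_all
      intro θ
      rw [Real.norm_eq_abs, abs_of_nonneg (Real.rpow_nonneg (abs_nonneg _) _),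
        abs_of_nonneg (hPgn_nonneg n r θ hr0 hr1)]
      exact Real.rpow_le_rpow (hPgn_nonneg n r θ hr0 hr1)
        (hPgn_le n r θ hr0 hr1) (by positivity)
  have hBnd : ∀ r θ : ℝ, 0 ≤ r → r < 1 →
      |poissonExt f r θ| ≤ (1/(2*π)) * ((2/(1-r)) * ∫ t in (0:ℝ)..(2*π), |f t|) := by
    intro r θ hr0 hr1
    refine (abs_poissonExt_le hm habs hr0 hr1).trans ?_
    apply mul_le_mul_of_nonneg_left _ (by positivity)
    rw [← intervalIntegral.integral_const_mul]
    apply intervalIntegral.integral_mono_on twoPi_pos.le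
      ((intervalIntegrable_iff_integrableOn_Ioc_of_le twoPi_pos.le).2
        (integrableOn_pkern_mul hm.abs hr0 hr1 habs))
      (((intervalIntegrable_iff_integrableOn_Ioc_of_le twoPi_pos.le).2 habs).const_mul _)
    intro t _
    exact mul_le_mul_of_nonneg_right (pkern_le hr0 hr1) (abs_nonneg _)
  have hInt_f : ∀ r : ℝ, 0 ≤ r → r < 1 →
      IntegrableOn (fun θ => |poissonExt f r θ| ^ (2*q)) (Ioc (0:ℝ) (2*π)) := by
    intro r hr0 hr1
    have hB0 : 0 ≤ (1/(2*π)) * ((2/(1-r)) * ∫ t in (0:ℝ)..(2*π), |f t|) := by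
      have : 0 ≤ ∫ t in (0:ℝ)..(2*π), |f t| :=
        intervalIntegral.integral_nonneg twoPi_pos.le fun t _ => abs_nonneg _
      have h2 : (0:ℝ) ≤ 2/(1-r) := div_nonneg (by norm_num) (by linarith)
      exact mul_nonneg (by positivity) (mul_nonneg h2 this)
    apply Integrable.mono'
      (g := fun _ => ((1/(2*π)) * ((2/(1-r)) * ∫ t in (0:ℝ)..(2*π), |f t|)) ^ (2*q))
      (integrableOn_const measure_Ioc_lt_top.ne)
    · exact ((hmeas_innerM f hm (2*q) (by positivity)).comp
        (measurable_const.prodMk measurable_id)).aestronglyMeasurable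
    · apply ae_of_all
      intro θ
      rw [Real.norm_eq_abs, abs_of_nonneg (Real.rpow_nonneg (abs_nonneg _) _)]
      exact Real.rpow_le_rpow (abs_nonneg _) (hBnd r θ hr0 hr1) (by positivity)
  -- each truncated double lintegral is bounded
  have hvI_le : ∀ n, (∫⁻ r in Ioo (0:ℝ) 1, vI n r) ≤ ENNReal.ofReal (π * (K * C ^ 2)) := by
    intro n
    set Gn : ℝ → ℝ := fun r =>
      (∫ θ in Ioc (0:ℝ) (2*π), |poissonExt (gn n) r θ| ^ (2*p)) * r with hGn_def
    have hGn_meas : Measurable Gn := by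
      apply Measurable.mul _ measurable_id
      exact ((hmeas_innerM (gn n) (hgnm n) (2*p) (by positivity)).stronglyMeasurable.integral_prod_right').measurable
    have hGn_nonneg : ∀ r ∈ Ioo (0:ℝ) 1, 0 ≤ Gn r := by
      intro r hr
      apply mul_nonneg _ hr.1.le
      exact setIntegral_nonneg measurableSet_Ioc fun θ _ => Real.rpow_nonneg (abs_nonneg _) _
    have hGn_bd : ∀ r ∈ Ioo (0:ℝ) 1, Gn r ≤ (2*π) * (n:ℝ) ^ (2*p) := by
      intro r hr
      have h1 : Gn r ≤ (∫ θ in Ioc (0:ℝ) (2*π), |poissonExt (gn n) r θ| ^ (2*p)) * 1 := by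
        apply mul_le_mul_of_nonneg_left hr.2.le
        exact setIntegral_nonneg measurableSet_Ioc fun θ _ => Real.rpow_nonneg (abs_nonneg _) _
      rw [mul_one] at h1
      refine h1.trans ?_
      have h2 : (∫ θ in Ioc (0:ℝ) (2*π), |poissonExt (gn n) r θ| ^ (2*p))
          ≤ ∫ _ in Ioc (0:ℝ) (2*π), (n:ℝ) ^ (2*p) := by
        apply setIntegral_mono_on (hInt_n n r hr.1.le hr.2)
          (integrableOn_const measure_Ioc_lt_top.ne) measurableSet_Ioc
        intro θ _
        rw [abs_of_nonneg (hPgn_nonneg n r θ hr.1.le hr.2)]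
        exact Real.rpow_le_rpow (hPgn_nonneg n r θ hr.1.le hr.2)
          (hPgn_le n r θ hr.1.le hr.2) (by positivity)
      refine h2.trans ?_
      rw [setIntegral_const, smul_eq_mul, Real.volume_real_Ioc_of_le twoPi_pos.le]
      norm_num
    have hGn_int : IntegrableOn Gn (Ioo (0:ℝ) 1) := by
      apply Integrable.mono' (g := fun _ => (2*π) * (n:ℝ) ^ (2*p))
        (integrableOn_const measure_Ioo_lt_top.ne)
        hGn_meas.aestronglyMeasurable
      filter_upwards [ae_restrict_mem measurableSet_Ioo] with r hr
      rw [Real.norm_eq_abs, abs_of_nonneg (hGn_nonneg r hr)]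
      exact hGn_bd r hr
    have heq1 : (∫⁻ r in Ioo (0:ℝ) 1, vI n r) = ∫⁻ r in Ioo (0:ℝ) 1, ENNReal.ofReal (Gn r) := by
      apply lintegral_congr_ae
      filter_upwards [ae_restrict_mem measurableSet_Ioo] with r hr
      show _ = ENNReal.ofReal ((∫ θ in Ioc (0:ℝ) (2*π), |poissonExt (gn n) r θ| ^ (2*p)) * r)
      rw [ENNReal.ofReal_mul (setIntegral_nonneg measurableSet_Ioc
        fun θ _ => Real.rpow_nonneg (abs_nonneg _) _)]
      show (∫⁻ θ in Ioc (0:ℝ) (2*π), ENNReal.ofReal (|poissonExt (gn n) r θ| ^ (2*p)))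
          * ENNReal.ofReal r = _
      congr 1
      exact (ofReal_integral_eq_lintegral_ofReal (hInt_n n r hr.1.le hr.2)
        (ae_of_all _ fun θ => Real.rpow_nonneg (abs_nonneg _) _)).symm
    have heq2 : (∫⁻ r in Ioo (0:ℝ) 1, ENNReal.ofReal (Gn r))
        = ENNReal.ofReal (∫ r in Ioo (0:ℝ) 1, Gn r) := by
      rw [ofReal_integral_eq_lintegral_ofReal hGn_int]
      filter_upwards [ae_restrict_mem measurableSet_Ioo] with r hr
      exact hGn_nonneg r hr
    have heq3 : (∫ r in Ioo (0:ℝ) 1, Gn r)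
        = ∫ r in (0:ℝ)..1, (∫ θ in (0:ℝ)..(2*π), |poissonExt (gn n) r θ| ^ (2*p)) * r := by
      rw [intervalIntegral.integral_of_le (zero_le_one' ℝ), ← hres]
      apply setIntegral_congr_fun measurableSet_Ioc
      intro r _
      simp only [hGn_def, intervalIntegral.integral_of_le twoPi_pos.le]
    rw [heq1, heq2, heq3]
    exact ENNReal.ofReal_le_ofReal (hAn n)
  -- the main comparison, r-a.e.
  have hu_le : ∀ᵐ r ∂(volume.restrict (Ioo (0:ℝ) 1)), uI r ≤ ⨆ n, vI n r := by
    filter_upwards [ae_restrict_mem measurableSet_Ioo] with r hr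
    rw [huI_def]
    have step1 : (∫⁻ θ in Ioc (0:ℝ) (2*π), ENNReal.ofReal (|poissonExt f r θ| ^ (2*q)))
        ≤ ∫⁻ θ in Ioc (0:ℝ) (2*π),
            ⨆ n, ENNReal.ofReal (|poissonExt (gn n) r θ| ^ (2*p)) :=
      lintegral_mono fun θ => hkey r θ hr.1 hr.2
    have step2 : (∫⁻ θ in Ioc (0:ℝ) (2*π),
          ⨆ n, ENNReal.ofReal (|poissonExt (gn n) r θ| ^ (2*p)))
        = ⨆ n, ∫⁻ θ in Ioc (0:ℝ) (2*π),
            ENNReal.ofReal (|poissonExt (gn n) r θ| ^ (2*p)) := by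
      apply lintegral_iSup
      · intro n
        exact ((hmeas_innerM (gn n) (hgnm n) (2*p) (by positivity)).comp
          (measurable_const.prodMk measurable_id)).ennreal_ofReal
      · intro n m hnm θ
        exact hmono_n r θ hr.1.le hr.2 hnm
    calc (∫⁻ θ in Ioc (0:ℝ) (2*π), ENNReal.ofReal (|poissonExt f r θ| ^ (2*q)))
          * ENNReal.ofReal r
        ≤ (⨆ n, ∫⁻ θ in Ioc (0:ℝ) (2*π),
            ENNReal.ofReal (|poissonExt (gn n) r θ| ^ (2*p))) * ENNReal.ofReal r := by
          apply mul_le_mul_left (step1.trans_eq step2)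
      _ = ⨆ n, vI n r := by
          rw [ENNReal.iSup_mul]
  -- conclude the ℝ≥0∞ bound for f
  have hT : (∫⁻ r in Ioo (0:ℝ) 1, uI r) ≤ ENNReal.ofReal (π * (K * C ^ 2)) := by
    calc (∫⁻ r in Ioo (0:ℝ) 1, uI r) ≤ ∫⁻ r in Ioo (0:ℝ) 1, ⨆ n, vI n r :=
          lintegral_mono_ae hu_le
      _ = ⨆ n, ∫⁻ r in Ioo (0:ℝ) 1, vI n r := by
          apply lintegral_iSup' (fun n => (hvmeas n).aemeasurable)
          filter_upwards [ae_restrict_mem measurableSet_Ioo] with r hr n m hnm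
          rw [hvI_def]
          apply mul_le_mul_left
          exact lintegral_mono fun θ => hmono_n r θ hr.1.le hr.2 hnm
      _ ≤ ENNReal.ofReal (π * (K * C ^ 2)) := iSup_le hvI_le
  -- back to the Bochner integral
  set F : ℝ → ℝ := fun r =>
    (∫ θ in Ioc (0:ℝ) (2*π), |poissonExt f r θ| ^ (2*q)) * r with hF_def
  have hF_meas : Measurable F := by
    apply Measurable.mul _ measurable_id
    exact ((hmeas_innerM f hm (2*q) (by positivity)).stronglyMeasurable.integral_prod_right').measurable
  have hF_nonneg : ∀ r ∈ Ioo (0:ℝ) 1, 0 ≤ F r := fun r hr =>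
    mul_nonneg (setIntegral_nonneg measurableSet_Ioc
      fun θ _ => Real.rpow_nonneg (abs_nonneg _) _) hr.1.le
  have hFu : ∀ r ∈ Ioo (0:ℝ) 1, ENNReal.ofReal (F r) = uI r := by
    intro r hr
    rw [hF_def, huI_def]
    rw [ENNReal.ofReal_mul (setIntegral_nonneg measurableSet_Ioc
      fun θ _ => Real.rpow_nonneg (abs_nonneg _) _)]
    congr 1
    rw [ofReal_integral_eq_lintegral_ofReal (hInt_f r hr.1.le hr.2)
      (ae_of_all _ fun θ => Real.rpow_nonneg (abs_nonneg _) _)]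
  have hTF : (∫⁻ r in Ioo (0:ℝ) 1, ENNReal.ofReal (F r)) ≤ ENNReal.ofReal (π * (K * C ^ 2)) := by
    refine le_trans (le_of_eq ?_) hT
    apply lintegral_congr_ae
    filter_upwards [ae_restrict_mem measurableSet_Ioo] with r hr
    exact hFu r hr
  have hF_ae_nonneg : 0 ≤ᵐ[volume.restrict (Ioo (0:ℝ) 1)] F := by
    filter_upwards [ae_restrict_mem measurableSet_Ioo] with r hr
    exact hF_nonneg r hr
  have hF_int : IntegrableOn F (Ioo (0:ℝ) 1) := by
    refine ⟨hF_meas.aestronglyMeasurable, ?_⟩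
    rw [hasFiniteIntegral_iff_ofReal hF_ae_nonneg]
    exact lt_of_le_of_lt hTF ENNReal.ofReal_lt_top
  have hfinal : (∫ r in (0:ℝ)..1,
      (∫ θ in (0:ℝ)..(2*π), |poissonExt f r θ| ^ (2*q)) * r) ≤ π * (K * C ^ 2) := by
    have he : (∫ r in (0:ℝ)..1,
        (∫ θ in (0:ℝ)..(2*π), |poissonExt f r θ| ^ (2*q)) * r)
        = ∫ r in Ioo (0:ℝ) 1, F r := by
      rw [intervalIntegral.integral_of_le (zero_le_one' ℝ), ← hres]
      apply setIntegral_congr_fun measurableSet_Ioc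
      intro r _
      simp only [hF_def, intervalIntegral.integral_of_le twoPi_pos.le]
    rw [he]
    rw [integral_eq_lintegral_of_nonneg_ae hF_ae_nonneg hF_meas.aestronglyMeasurable]
    have := ENNReal.toReal_mono ENNReal.ofReal_ne_top hTF
    rw [ENNReal.toReal_ofReal
      (mul_nonneg Real.pi_pos.le (mul_nonneg hK0 (sq_nonneg C)))] at this
    exact this
  have hπ : (0:ℝ) < π := Real.pi_pos
  calc (1 / π) * ∫ r in (0:ℝ)..1,
        (∫ θ in (0:ℝ)..(2*π), |poissonExt f r θ| ^ (2*q)) * r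
      ≤ (1 / π) * (π * (K * C ^ 2)) := mul_le_mul_of_nonneg_left hfinal (by positivity)
    _ = K * C ^ 2 := by field_simp

theorem stmt_19 (p q : ℝ) (hp : 1 < p) (hpq : p < q)
    (hKp : {K : ℝ | IsoBound p K}.Nonempty)
    (hKq : {K : ℝ | IsoBound q K}.Nonempty) :
    sInf {K : ℝ | IsoBound q K} ≤ sInf {K : ℝ | IsoBound p K} := by
  have hsub : {K : ℝ | IsoBound p K} ⊆ {K : ℝ | IsoBound q K} :=
    fun K hK => isoBound_mono hp hpq hK
  exact csInf_le_csInf ⟨0, fun K hK => hK.1⟩ hKp hsub
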